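/- arXiv:2205.08482 — 2 statements merged into one kernel-verified Lean document; each statement's English description precedes it below -/
import Mathlib

section
/- Let φ : ℝⁿ → ℝ be a differentiable convex function such that 0 lies in the interior of the image ∇φ(ℝⁿ) of its gradient map. Then there exists a constant C > 0 such that φ(ξ) ≥ C⁻¹·|ξ| − C for all ξ ∈ ℝⁿ. In particular, φ is proper and bounded from below. -/
open scoped RealInnerProductSpace

lemma subgrad {F : Type*} [NormedAddCommGroup F] [InnerProductSpace ℝ F] [CompleteSpace F]
    {φ : F → ℝ} (hconv : ConvexOn ℝ Set.univ φ) (hdiff : Differentiable ℝ φ)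
    (x y : F) : φ x + ⟪gradient φ x, y - x⟫ ≤ φ y := by
  set v := y - x with hv
  have hline : ∀ t : ℝ, HasDerivAt (fun t : ℝ => x + t • v) v t := by
    intro t
    simpa using ((hasDerivAt_id t).smul_const v).const_add x
  have hφ : ∀ t : ℝ, HasDerivAt (fun t : ℝ => φ (x + t • v)) ⟪gradient φ (x + t • v), v⟫ t := by
    intro t
    have hF : HasFDerivAt φ (InnerProductSpace.toDual ℝ F (gradient φ (x + t • v))) (x + t • v) :=
      (hdiff (x + t • v)).hasGradientAt.hasFDerivAt
    exact (hF.comp_hasDerivAt t (hline t) :)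
  have hg : ConvexOn ℝ Set.univ (fun t : ℝ => φ (x + t • v)) := by
    have := hconv.comp_affineMap (AffineMap.lineMap x y : ℝ →ᵃ[ℝ] F)
    simp only [Set.preimage_univ] at this
    convert this using 2 with t
    any_goals rfl
    simp only [AffineMap.lineMap_apply, hv, Function.comp_apply, smul_sub, vsub_eq_sub,
      vadd_eq_add]
    rw [add_comm]
  have key := hg.le_slope_of_hasDerivAt (Set.mem_univ (0:ℝ)) (Set.mem_univ (1:ℝ)) one_pos
    (by simpa using hφ 0)
  have hxy : x + v = y := by simp [hv]
  rw [slope_def_field] at key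
  have h0 : x + (0:ℝ) • v = x := by simp
  have h1 : x + (1:ℝ) • v = y := by simp [hv]
  rw [h0, h1] at key
  simp only [div_one, sub_zero] at key
  simp only [inner_gradient_left] at key ⊢
  linarith

theorem convex_linear_growth_of_zero_mem_interior_gradient_image {n : ℕ}
    (φ : EuclideanSpace ℝ (Fin n) → ℝ)
    (hconv : ConvexOn ℝ Set.univ φ)
    (hdiff : Differentiable ℝ φ)
    (h0 : (0 : EuclideanSpace ℝ (Fin n)) ∈ interior (Set.range (fun ξ => gradient φ ξ))) :
    ∃ C > 0, ∀ ξ, φ ξ ≥ C⁻¹ * ‖ξ‖ - C := by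
  rw [mem_interior_iff_mem_nhds, Metric.mem_nhds_iff] at h0
  obtain ⟨ε, hε, hball⟩ := h0
  set δ := ε / 2 with hδdef
  have hδ : 0 < δ := by positivity
  -- choose preimages
  have hchoice : ∀ p : Fin n × Bool, ∃ η : EuclideanSpace ℝ (Fin n),
      gradient φ η = EuclideanSpace.single p.1 (if p.2 then δ else -δ) := by
    intro p
    have hmem : (EuclideanSpace.single p.1 (if p.2 then δ else -δ) : EuclideanSpace ℝ (Fin n)) ∈ Metric.ball 0 ε := by
      rw [Metric.mem_ball, dist_zero_right, EuclideanSpace.norm_single, Real.norm_eq_abs]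
      have : |if p.2 then δ else -δ| = δ := by cases p.2 <;> simp [abs_of_pos hδ, hδ.le]
      rw [this]; linarith
    obtain ⟨η, hη⟩ := hball hmem
    exact ⟨η, hη⟩
  choose η hη using hchoice
  set M := ∑ p : Fin n × Bool, |⟪gradient φ (η p), η p⟫ - φ (η p)| with hM
  have hMnonneg : 0 ≤ M := Finset.sum_nonneg fun p _ => abs_nonneg _
  set C := max (Real.sqrt n / δ) (M + |φ 0| + 1) with hC
  have hCpos : 0 < C := lt_of_lt_of_le (by positivity) (le_max_right _ _)
  refine ⟨C, hCpos, fun ξ => ?_⟩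
  have hCM : M + |φ 0| ≤ C := le_trans (by linarith) (le_max_right _ _)
  by_cases hξ0 : ξ = 0
  · subst hξ0
    simp only [norm_zero, mul_zero, zero_sub, ge_iff_le]
    have : -|φ 0| ≤ φ 0 := neg_abs_le _
    linarith
  -- ξ ≠ 0, so n ≥ 1 and there's a big coordinate
  have hn : 0 < n := by
    by_contra h
    apply hξ0
    have hn0 : n = 0 := by omega
    subst hn0
    ext j
    exact j.elim0
  have hsum : ‖ξ‖ ^ 2 = ∑ i : Fin n, (ξ i) ^ 2 := by
    rw [EuclideanSpace.norm_eq, Real.sq_sqrt (Finset.sum_nonneg fun i _ => sq_nonneg _)]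
    simp [sq_abs]
  obtain ⟨i, -, hi⟩ : ∃ i ∈ Finset.univ, ‖ξ‖ ^ 2 / n ≤ (ξ i) ^ 2 := by
    apply Finset.exists_le_of_sum_le ⟨⟨0, hn⟩, Finset.mem_univ _⟩
    rw [Finset.sum_const, Finset.card_univ, Fintype.card_fin, ← hsum, nsmul_eq_mul]
    rw [mul_div_cancel₀]
    exact_mod_cast hn.ne'
  have hnorm_le : ‖ξ‖ ≤ Real.sqrt n * |ξ i| := by
    have h1 : ‖ξ‖ ^ 2 ≤ n * (ξ i) ^ 2 := by
      rw [div_le_iff₀ (by exact_mod_cast hn)] at hi; linarith [hi]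
    calc ‖ξ‖ = Real.sqrt (‖ξ‖ ^ 2) := by rw [Real.sqrt_sq (norm_nonneg _)]
      _ ≤ Real.sqrt (n * (ξ i) ^ 2) := Real.sqrt_le_sqrt h1
      _ = Real.sqrt n * |ξ i| := by
          rw [Real.sqrt_mul (by positivity), Real.sqrt_sq_eq_abs]
  set b : Bool := decide (0 ≤ ξ i) with hb
  set p : Fin n × Bool := (i, b)
  have hkey := subgrad hconv hdiff (η p) ξ
  rw [inner_sub_right, hη p] at hkey
  have hginner : ⟪(EuclideanSpace.single p.1 (if p.2 then δ else -δ) : EuclideanSpace ℝ (Fin n)), ξ⟫ = δ * |ξ i| := by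
    rw [EuclideanSpace.inner_single_left]
    simp only [starRingEnd_apply, star_trivial]
    by_cases hpos : 0 ≤ ξ i
    · simp [p, hb, hpos, abs_of_nonneg hpos]
    · simp [p, hb, hpos, abs_of_neg (lt_of_not_ge hpos)]
  have hMbound : ⟪(EuclideanSpace.single p.1 (if p.2 then δ else -δ) : EuclideanSpace ℝ (Fin n)), η p⟫ - φ (η p) ≤ M := by
    rw [← hη p]
    calc ⟪gradient φ (η p), η p⟫ - φ (η p) ≤ |⟪gradient φ (η p), η p⟫ - φ (η p)| := le_abs_self _
      _ ≤ M := Finset.single_le_sum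
          (f := fun q : Fin n × Bool => |⟪gradient φ (η q), η q⟫ - φ (η q)|)
          (fun q _ => abs_nonneg _) (Finset.mem_univ p)
  -- combine
  have hCinv : C⁻¹ * ‖ξ‖ ≤ δ * |ξ i| := by
    have hsn : 0 < Real.sqrt n := Real.sqrt_pos.mpr (by exact_mod_cast hn)
    have h2 : C⁻¹ ≤ δ / Real.sqrt n := by
      have h3 := inv_anti₀ (show (0:ℝ) < Real.sqrt n / δ by positivity)
        (le_max_left (Real.sqrt n / δ) (M + |φ 0| + 1))
      rwa [inv_div] at h3
    calc C⁻¹ * ‖ξ‖ ≤ (δ / Real.sqrt n) * ‖ξ‖ := by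
          apply mul_le_mul_of_nonneg_right h2 (norm_nonneg _)
      _ ≤ (δ / Real.sqrt n) * (Real.sqrt n * |ξ i|) := by
          apply mul_le_mul_of_nonneg_left hnorm_le (by positivity)
      _ = δ * |ξ i| := by
          field_simp
  rw [hginner] at hkey
  have habs : (0:ℝ) ≤ |φ 0| := abs_nonneg _
  linarith
end

section
/- Let r₀ ≥ 1, ε ∈ (0,2), C > 0, and let v : [r₀, ∞) → ℝ be continuously differentiable with v(r) → 0 as r → ∞. Suppose that for all r ≥ r₀, 0 ≤ (d/dr)(e^{−r²/2}·v(r)) ≤ C·r^{1−ε}·e^{−r²/2}. Then −C·r^{−ε} ≤ v(r) ≤ 0 for all r ≥ r₀. -/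
open Real Filter

theorem decay_from_gaussian_weighted_deriv (r₀ : ℝ) (hr₀ : 1 ≤ r₀) (ε : ℝ)
    (hε : ε ∈ Set.Ioo (0:ℝ) 2) (C : ℝ) (hC : 0 < C) (v g' : ℝ → ℝ)
    (hderiv : ∀ r ≥ r₀, HasDerivAt (fun r => Real.exp (-r ^ 2 / 2) * v r) (g' r) r)
    (hcont : ContinuousOn g' (Set.Ici r₀))
    (hlow : ∀ r ≥ r₀, 0 ≤ g' r)
    (hup : ∀ r ≥ r₀, g' r ≤ C * r ^ (1 - ε) * Real.exp (-r ^ 2 / 2))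
    (hlim : Tendsto v atTop (nhds 0)) :
    ∀ r ≥ r₀, -C * r ^ (-ε) ≤ v r ∧ v r ≤ 0 := by
  obtain ⟨hε0, hε2⟩ := hε
  set g : ℝ → ℝ := fun s => Real.exp (-s ^ 2 / 2) * v s with hg
  -- limit of exp (-s^2/2)
  have hexp : Tendsto (fun s : ℝ => Real.exp (-s ^ 2 / 2)) atTop (nhds 0) := by
    apply Real.tendsto_exp_atBot.comp
    have h1 : Tendsto (fun s : ℝ => s ^ 2) atTop atTop := tendsto_pow_atTop two_ne_zero
    have h2 : Tendsto (fun s : ℝ => -s ^ 2) atTop atBot := tendsto_neg_atBot_iff.mpr h1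
    exact h2.atBot_div_const (by norm_num)
  have hglim : Tendsto g atTop (nhds 0) := by
    simpa using hexp.mul hlim
  -- g is monotone on Ici r₀
  have hmono : MonotoneOn g (Set.Ici r₀) := by
    apply monotoneOn_of_deriv_nonneg (convex_Ici r₀)
    · exact fun x hx => ((hderiv x hx).continuousAt).continuousWithinAt
    · rw [interior_Ici]
      exact fun x hx => ((hderiv x (le_of_lt hx)).differentiableAt).differentiableWithinAt
    · rw [interior_Ici]
      intro x hx
      rw [(hderiv x (le_of_lt hx)).deriv]
      exact hlow x (le_of_lt hx)
  -- conclude g ≤ 0 on Ici r₀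
  have hgle : ∀ r ≥ r₀, g r ≤ 0 := by
    intro r hr
    refine ge_of_tendsto hglim ?_
    filter_upwards [eventually_ge_atTop r] with s hs
    exact hmono hr (le_trans hr hs) hs
  -- auxiliary function h
  set h : ℝ → ℝ := fun s => g s + C * (s ^ (-ε) * Real.exp (-s ^ 2 / 2)) with hh
  have hpos : ∀ s : ℝ, r₀ ≤ s → (0:ℝ) < s := fun s hs => lt_of_lt_of_le (by linarith) hs
  -- derivative of h
  have hhderiv : ∀ s ≥ r₀, HasDerivAt h
      (g' s + C * ((-ε) * s ^ (-ε - 1) * Real.exp (-s ^ 2 / 2)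
        + s ^ (-ε) * (Real.exp (-s ^ 2 / 2) * (-s)))) s := by
    intro s hs
    have h1 : HasDerivAt (fun s : ℝ => -s ^ 2 / 2) (-s) s := by
      have : HasDerivAt (fun s : ℝ => -s ^ 2 / 2) (-((2:ℕ) * s ^ (2 - 1)) / 2) s := ((hasDerivAt_pow 2 s).neg.div_const 2)
      convert this using 1
      ring
    have hexp' : HasDerivAt (fun s : ℝ => Real.exp (-s ^ 2 / 2))
        (Real.exp (-s ^ 2 / 2) * (-s)) s := h1.exp
    have hrpow : HasDerivAt (fun s : ℝ => s ^ (-ε)) ((-ε) * s ^ (-ε - 1)) s :=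
      Real.hasDerivAt_rpow_const (Or.inl (hpos s hs).ne')
    exact (hderiv s hs).add ((hrpow.mul hexp').const_mul C)
  -- derivative of h is nonpositive
  have hhderiv_nonpos : ∀ s ≥ r₀, g' s + C * ((-ε) * s ^ (-ε - 1) * Real.exp (-s ^ 2 / 2)
        + s ^ (-ε) * (Real.exp (-s ^ 2 / 2) * (-s))) ≤ 0 := by
    intro s hs
    have hs0 : (0:ℝ) < s := hpos s hs
    have key : s ^ (-ε) * s = s ^ (1 - ε) := by
      rw [← Real.rpow_add_one hs0.ne']
      congr 1
      ring
    have h2 := hup s hs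
    have h3 : 0 ≤ C * (ε * s ^ (-ε - 1) * Real.exp (-s ^ 2 / 2)) := by positivity
    have expand : C * ((-ε) * s ^ (-ε - 1) * Real.exp (-s ^ 2 / 2)
        + s ^ (-ε) * (Real.exp (-s ^ 2 / 2) * (-s)))
        = -(C * (ε * s ^ (-ε - 1) * Real.exp (-s ^ 2 / 2)))
          - C * s ^ (1 - ε) * Real.exp (-s ^ 2 / 2) := by
      rw [show s ^ (-ε) * (Real.exp (-s ^ 2 / 2) * (-s))
        = -(s ^ (-ε) * s * Real.exp (-s ^ 2 / 2)) by ring, key]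
      ring
    rw [expand]
    linarith
  -- h is antitone on Ici r₀
  have hanti : AntitoneOn h (Set.Ici r₀) := by
    apply antitoneOn_of_deriv_nonpos (convex_Ici r₀)
    · exact fun x hx => ((hhderiv x hx).continuousAt).continuousWithinAt
    · rw [interior_Ici]
      exact fun x hx => ((hhderiv x (le_of_lt hx)).differentiableAt).differentiableWithinAt
    · rw [interior_Ici]
      intro x hx
      rw [(hhderiv x (le_of_lt hx)).deriv]
      exact hhderiv_nonpos x (le_of_lt hx)
  -- limit of h
  have hhlim : Tendsto h atTop (nhds 0) := by
    have hr : Tendsto (fun s : ℝ => s ^ (-ε)) atTop (nhds 0) :=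
      tendsto_rpow_neg_atTop hε0
    have := ((hr.mul hexp).const_mul C)
    simpa using hglim.add this
  have hhge : ∀ r ≥ r₀, 0 ≤ h r := by
    intro r hr
    refine le_of_tendsto hhlim ?_
    filter_upwards [eventually_ge_atTop r] with s hs
    exact hanti hr (le_trans hr hs) hs
  intro r hr
  have hE : (0:ℝ) < Real.exp (-r ^ 2 / 2) := Real.exp_pos _
  constructor
  · have := hhge r hr
    simp only [hh, hg] at this
    nlinarith [Real.rpow_natCast r 2]
  · have := hgle r hr
    simp only [hg] at this
    nlinarith
end
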